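/- Let A_n := C_n(f) with f a nonnegative trigonometric polynomial not identically zero, and let V_n := I_n − ω A_n with 0 < ω < 2/‖f‖_∞. Let D_n = a₀ I_n be the main diagonal of A_n, where a₀ = (1/2π)∫_0^{2π} f. If α ≤ a₀ ω (2 − ω‖f‖_∞), then for all x ∈ ℂ^n, ‖V_n x‖²_{A_n} ≤ ‖x‖²_{A_n} − α ‖x‖²_{A_n D_n^{-1} A_n}. -/

import Mathlib

open Matrix Complex
open scoped Matrix ComplexConjugate

noncomputable section

/-- The Fourier matrix of size `n`: `F_n = (1/√n)[e^{-2πijk/n}]_{j,k=0}^{n-1}`. -/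
def fourierMatrix (n : ℕ) : Matrix (Fin n) (Fin n) ℂ :=
  Matrix.of fun j k : Fin n =>
    (((Real.sqrt n : ℝ) : ℂ))⁻¹ *
      Complex.exp (-(2 * (Real.pi : ℂ) * Complex.I * ((j : ℕ) : ℂ) * ((k : ℕ) : ℂ)) / (n : ℂ))

/-- A real-valued function is a trigonometric polynomial: a finite sum `∑_{|j|≤c} a_j e^{ijx}`. -/
def IsTrigPolyR (f : ℝ → ℝ) : Prop :=
  ∃ (c : ℕ) (a : ℤ → ℂ), ∀ x : ℝ,
    (f x : ℂ) = ∑ j ∈ Finset.Icc (-(c : ℤ)) (c : ℤ), a j * Complex.exp (Complex.I * (j : ℂ) * (x : ℂ))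

/-- The circulant matrix generated by a real-valued `f`:
`C_n(f) = F_n · diag_{j}(f(2πj/n)) · F_nᴴ`. -/
def circulantGenR (n : ℕ) (f : ℝ → ℝ) : Matrix (Fin n) (Fin n) ℂ :=
  fourierMatrix n *
    Matrix.diagonal (fun j : Fin n => ((f (2 * Real.pi * (j : ℕ) / n) : ℝ) : ℂ)) *
    (fourierMatrix n)ᴴ

/-- The zeroth Fourier coefficient `a₀ = (1/2π)∫_0^{2π} f`. -/
def zerothCoeff (f : ℝ → ℝ) : ℝ := (1 / (2 * Real.pi)) * ∫ x in (0 : ℝ)..(2 * Real.pi), f x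

/-- `‖f‖_∞ = sup_{x ∈ [0,2π)} |f x|`. -/
def supNorm (f : ℝ → ℝ) : ℝ := sSup ((fun x => |f x|) '' Set.Ico (0 : ℝ) (2 * Real.pi))

/-- The squared weighted Euclidean (semi-)norm `‖x‖_X² = x^H X x` (its real part). -/
def wnormSq {n : ℕ} (X : Matrix (Fin n) (Fin n) ℂ) (x : Fin n → ℂ) : ℝ :=
  (dotProduct (star x) (X.mulVec x)).re

/-! ### Auxiliary lemmas -/

lemma sum_zeta_aux (n : ℕ) (hn : 0 < n) (d : ℤ) (hd : d ≠ 0) (hdn : d.natAbs < n) :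
    ∑ l ∈ Finset.range n,
      (Complex.exp (2 * (Real.pi : ℂ) * Complex.I * (d : ℂ) / (n : ℂ))) ^ l = 0 := by
  set ζ := Complex.exp (2 * (Real.pi : ℂ) * Complex.I * (d : ℂ) / (n : ℂ)) with hζ
  have hn0 : (n : ℂ) ≠ 0 := Nat.cast_ne_zero.mpr hn.ne'
  have hζ1 : ζ ≠ 1 := by
    rw [hζ]
    intro h
    rw [Complex.exp_eq_one_iff] at h
    obtain ⟨m, hm⟩ := h
    have hdc : (d : ℂ) = (m : ℂ) * (n : ℂ) := by
      field_simp at hm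
      have h2 : (2 : ℂ) * (Real.pi : ℂ) * Complex.I ≠ 0 := by
        simp [Real.pi_ne_zero, Complex.I_ne_zero, Complex.ofReal_ne_zero]
      apply mul_left_cancel₀ h2
      linear_combination (2 * (Real.pi : ℂ) * Complex.I) * hm
    have hdz : d = m * n := by exact_mod_cast hdc
    rcases eq_or_ne m 0 with rfl | hm0
    · simp at hdz; exact hd hdz
    · have h1 : d.natAbs = m.natAbs * n := by
        rw [hdz, Int.natAbs_mul]; simp
      have h3 : 1 ≤ m.natAbs := Int.natAbs_pos.mpr hm0
      have h4 : n ≤ m.natAbs * n := Nat.le_mul_of_pos_left n (by omega)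
      omega
  have hζn : ζ ^ n = 1 := by
    rw [hζ, ← Complex.exp_nat_mul]
    have : (n : ℂ) * (2 * (Real.pi : ℂ) * Complex.I * (d : ℂ) / (n : ℂ))
        = (d : ℂ) * (2 * (Real.pi : ℂ) * Complex.I) := by field_simp
    rw [this, Complex.exp_int_mul_two_pi_mul_I]
  rw [geom_sum_eq hζ1, hζn, sub_self, zero_div]

lemma fourier_entry_prod (n : ℕ) (hn : 0 < n) (j k l : Fin n) :
    star (fourierMatrix n l j) * fourierMatrix n l k
      = (n : ℂ)⁻¹ *
        (Complex.exp (2 * (Real.pi : ℂ) * Complex.I * ((((j:ℕ):ℤ) - ((k:ℕ):ℤ) : ℤ) : ℂ) / (n : ℂ))) ^ (l : ℕ) := by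
  have hn0 : (n : ℂ) ≠ 0 := Nat.cast_ne_zero.mpr hn.ne'
  have hs : ((Real.sqrt n : ℝ) : ℂ) * ((Real.sqrt n : ℝ) : ℂ) = (n : ℂ) := by
    rw [← Complex.ofReal_mul, Real.mul_self_sqrt (Nat.cast_nonneg n)]
    simp
  have harg : (starRingEnd ℂ) (-(2 * (Real.pi : ℂ) * Complex.I * ((l:ℕ):ℂ) * ((j:ℕ):ℂ)) / (n : ℂ))
      = (2 * (Real.pi : ℂ) * Complex.I * ((l:ℕ):ℂ) * ((j:ℕ):ℂ)) / (n : ℂ) := by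
    simp only [map_div₀, map_neg, _root_.map_mul, Complex.conj_I, Complex.conj_ofReal,
      Complex.conj_natCast, map_ofNat]
    ring
  have hstar : star (fourierMatrix n l j)
      = (((Real.sqrt n : ℝ) : ℂ))⁻¹ *
        Complex.exp ((2 * (Real.pi : ℂ) * Complex.I * ((l:ℕ):ℂ) * ((j:ℕ):ℂ)) / (n : ℂ)) := by
    simp only [fourierMatrix, Matrix.of_apply, star_mul', star_inv₀, Complex.star_def,
      ← Complex.exp_conj, harg]
    congr 1
    simp [Complex.conj_ofReal]
  rw [hstar]
  simp only [fourierMatrix, Matrix.of_apply]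
  rw [← Complex.exp_nat_mul, mul_mul_mul_comm, ← Complex.exp_add, ← mul_inv, hs]
  congr 1
  push_cast
  field_simp
  ring

lemma fourier_unitary (n : ℕ) (hn : 0 < n) :
    (fourierMatrix n)ᴴ * fourierMatrix n = 1 := by
  have hn0 : (n : ℂ) ≠ 0 := Nat.cast_ne_zero.mpr hn.ne'
  ext j k
  rw [Matrix.mul_apply]
  have key : ∀ l : Fin n, (fourierMatrix n)ᴴ j l * fourierMatrix n l k
      = (n : ℂ)⁻¹ *
        (Complex.exp (2 * (Real.pi : ℂ) * Complex.I * ((((j:ℕ):ℤ) - ((k:ℕ):ℤ) : ℤ) : ℂ) / (n : ℂ))) ^ (l : ℕ) := by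
    intro l
    rw [Matrix.conjTranspose_apply]
    exact fourier_entry_prod n hn j k l
  rw [Finset.sum_congr rfl fun l _ => key l, ← Finset.mul_sum]
  rw [show (∑ l : Fin n,
      (Complex.exp (2 * (Real.pi : ℂ) * Complex.I * ((((j:ℕ):ℤ) - ((k:ℕ):ℤ) : ℤ) : ℂ) / (n : ℂ))) ^ (l : ℕ))
      = ∑ l ∈ Finset.range n,
      (Complex.exp (2 * (Real.pi : ℂ) * Complex.I * ((((j:ℕ):ℤ) - ((k:ℕ):ℤ) : ℤ) : ℂ) / (n : ℂ))) ^ l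
    from Fin.sum_univ_eq_sum_range _ n]
  by_cases hjk : j = k
  · subst hjk
    simp only [sub_self, Int.cast_zero, mul_zero, zero_div, Complex.exp_zero, one_pow,
      Finset.sum_const, Finset.card_range, nsmul_eq_mul, mul_one]
    rw [inv_mul_cancel₀ hn0, Matrix.one_apply_eq]
  · have hd : ((j:ℕ):ℤ) - ((k:ℕ):ℤ) ≠ 0 := by
      intro h
      apply hjk
      have : (j:ℕ) = (k:ℕ) := by omega
      exact Fin.ext this
    have hdn : (((j:ℕ):ℤ) - ((k:ℕ):ℤ)).natAbs < n := by
      have := j.isLt; have := k.isLt; omega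
    rw [sum_zeta_aux n hn _ hd hdn, mul_zero, Matrix.one_apply_ne hjk]

lemma wnormSq_conj {n : ℕ} (F : Matrix (Fin n) (Fin n) ℂ) (d : Fin n → ℝ) (x : Fin n → ℂ) :
    wnormSq (F * Matrix.diagonal (fun j => (d j : ℂ)) * Fᴴ) x
      = ∑ j, d j * Complex.normSq ((Fᴴ).mulVec x j) := by
  unfold wnormSq
  set y := (Fᴴ).mulVec x with hy
  have h1 : (F * Matrix.diagonal (fun j => (d j : ℂ)) * Fᴴ).mulVec x
      = F.mulVec ((Matrix.diagonal (fun j => (d j : ℂ))).mulVec y) := by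
    rw [← Matrix.mulVec_mulVec, ← Matrix.mulVec_mulVec]
  have h2 : star x ᵥ* F = star y := by
    rw [hy, Matrix.star_mulVec, Matrix.conjTranspose_conjTranspose]
  rw [h1, Matrix.dotProduct_mulVec, h2, dotProduct]
  rw [Complex.re_sum]
  refine Finset.sum_congr rfl fun j _ => ?_
  rw [Matrix.mulVec_diagonal]
  have h3 : star y j * ((d j : ℂ) * y j) = ((d j : ℝ) : ℂ) * ((Complex.normSq (y j) : ℝ) : ℂ) := by
    rw [show star y j = conj (y j) from rfl]
    rw [show ((Complex.normSq (y j) : ℝ) : ℂ) = conj (y j) * y j by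
      rw [mul_comm, Complex.mul_conj]]
    ring
  rw [Pi.star_apply] at h3 ⊢
  rw [h3, ← Complex.ofReal_mul, Complex.ofReal_re]
lemma trig_continuous {f : ℝ → ℝ} (hf : IsTrigPolyR f) : Continuous f := by
  obtain ⟨c, a, hfa⟩ := hf
  have hg : Continuous fun x : ℝ =>
      ∑ j ∈ Finset.Icc (-(c : ℤ)) (c : ℤ), a j * Complex.exp (Complex.I * (j : ℂ) * (x : ℂ)) := by
    apply continuous_finset_sum
    intro j _
    exact continuous_const.mul (Complex.continuous_exp.comp
      ((continuous_const.mul Complex.continuous_ofReal)))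
  have : f = fun x : ℝ => ((∑ j ∈ Finset.Icc (-(c : ℤ)) (c : ℤ),
      a j * Complex.exp (Complex.I * (j : ℂ) * (x : ℂ))).re) := by
    funext x
    rw [← hfa x, Complex.ofReal_re]
  rw [this]
  exact Complex.continuous_re.comp hg

lemma trig_periodic {f : ℝ → ℝ} (hf : IsTrigPolyR f) :
    Function.Periodic f (2 * Real.pi) := by
  obtain ⟨c, a, hfa⟩ := hf
  intro x
  have : ((f (x + 2 * Real.pi) : ℝ) : ℂ) = ((f x : ℝ) : ℂ) := by
    rw [hfa, hfa]
    refine Finset.sum_congr rfl fun j _ => ?_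
    congr 1
    push_cast
    rw [show Complex.I * (j : ℂ) * ((x : ℂ) + 2 * (Real.pi : ℂ))
        = Complex.I * (j : ℂ) * (x : ℂ) + (j : ℂ) * (2 * (Real.pi : ℂ) * Complex.I) by ring]
    rw [Complex.exp_add, Complex.exp_int_mul_two_pi_mul_I, mul_one]
  exact_mod_cast this

lemma integral_pos_of_trig {f : ℝ → ℝ} (hf : IsTrigPolyR f) (hf0 : ∀ x, 0 ≤ f x)
    (hfne : ∃ x, f x ≠ 0) : 0 < ∫ x in (0:ℝ)..(2 * Real.pi), f x := by
  obtain ⟨x₀, hx₀⟩ := hfne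
  have hcont := trig_continuous hf
  have hper := trig_periodic hf
  have h2π : (0:ℝ) < 2 * Real.pi := by positivity
  have heq : (∫ x in (0:ℝ)..(2 * Real.pi), f x)
      = ∫ x in (x₀ - Real.pi)..(x₀ - Real.pi + 2 * Real.pi), f x := by
    have := hper.intervalIntegral_add_eq 0 (x₀ - Real.pi)
    rw [zero_add] at this
    exact this
  rw [heq]
  have hab : x₀ - Real.pi < x₀ - Real.pi + 2 * Real.pi := by linarith
  rw [intervalIntegral.integral_of_le hab.le]
  rw [MeasureTheory.setIntegral_pos_iff_support_of_nonneg_ae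
    (Filter.Eventually.of_forall fun x => hf0 x)
    (hcont.integrableOn_Ioc)]
  have hopen : IsOpen (Function.support f ∩
      Set.Ioo (x₀ - Real.pi) (x₀ - Real.pi + 2 * Real.pi)) :=
    hcont.isOpen_support.inter isOpen_Ioo
  have hmem : x₀ ∈ Function.support f ∩
      Set.Ioo (x₀ - Real.pi) (x₀ - Real.pi + 2 * Real.pi) :=
    ⟨hx₀, by constructor <;> linarith [Real.pi_pos]⟩
  have hpos := hopen.measure_pos MeasureTheory.volume ⟨x₀, hmem⟩
  exact lt_of_lt_of_le hpos (MeasureTheory.measure_mono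
    (Set.inter_subset_inter_right _ Set.Ioo_subset_Ioc_self))

theorem richardson_smoothing_property (n : ℕ) (hn : 0 < n)
    (f : ℝ → ℝ) (hf : IsTrigPolyR f) (hf0 : ∀ x, 0 ≤ f x) (hfne : ∃ x, f x ≠ 0)
    (ω α : ℝ) (hω0 : 0 < ω) (hω1 : ω < 2 / supNorm f)
    (hα : α ≤ zerothCoeff f * ω * (2 - ω * supNorm f)) :
    ∀ x : Fin n → ℂ,
      wnormSq (circulantGenR n f)
          (((1 : Matrix (Fin n) (Fin n) ℂ) - (ω : ℂ) • circulantGenR n f).mulVec x)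
        ≤ wnormSq (circulantGenR n f) x
            - α * wnormSq
                (circulantGenR n f *
                  ((zerothCoeff f : ℂ) • (1 : Matrix (Fin n) (Fin n) ℂ))⁻¹ *
                  circulantGenR n f) x := by
  intro x
  set F := fourierMatrix n with hF
  set lam : Fin n → ℝ := fun j => f (2 * Real.pi * (j : ℕ) / n) with hlam
  set C := circulantGenR n f with hC
  have hCdef : C = F * Matrix.diagonal (fun j => ((lam j : ℝ) : ℂ)) * Fᴴ := rfl
  set a₀ := zerothCoeff f with ha₀
  set M := supNorm f with hM
  set y := (Fᴴ).mulVec x with hy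
  have hU : Fᴴ * F = 1 := fourier_unitary n hn
  -- a₀ > 0
  have ha₀pos : 0 < a₀ := by
    rw [ha₀, zerothCoeff]
    have := integral_pos_of_trig hf hf0 hfne
    have h2π : (0:ℝ) < 2 * Real.pi := by positivity
    positivity
  have ha₀c : ((a₀ : ℝ) : ℂ) ≠ 0 := by
    exact_mod_cast Complex.ofReal_ne_zero.mpr ha₀pos.ne'
  -- supNorm facts
  have hcont := trig_continuous hf
  have hbdd : BddAbove ((fun x => |f x|) '' Set.Ico (0:ℝ) (2 * Real.pi)) := by
    have h1 : BddAbove ((fun x => |f x|) '' Set.Icc (0:ℝ) (2 * Real.pi)) :=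
      (isCompact_Icc.image_of_continuousOn (hcont.abs.continuousOn)).bddAbove
    exact h1.mono (Set.image_mono Set.Ico_subset_Icc_self)
  have hlamM : ∀ j : Fin n, lam j ≤ M := by
    intro j
    have hmem : (2 * Real.pi * (j : ℕ) / n) ∈ Set.Ico (0:ℝ) (2 * Real.pi) := by
      constructor
      · positivity
      · rw [div_lt_iff₀ (by exact_mod_cast hn)]
        have : ((j:ℕ):ℝ) < (n:ℝ) := by exact_mod_cast j.isLt
        nlinarith [Real.pi_pos]
    have h5 : |f (2 * Real.pi * (j : ℕ) / n)|
        ≤ sSup ((fun x => |f x|) '' Set.Ico (0:ℝ) (2 * Real.pi)) :=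
      le_csSup hbdd ⟨_, hmem, rfl⟩
    rw [hM, supNorm]
    rwa [_root_.abs_of_nonneg (hf0 _)] at h5
  have hlam0 : ∀ j : Fin n, 0 ≤ lam j := fun j => hf0 _
  have hMpos : 0 < M := by
    by_contra h
    push_neg at h
    have : 2 / M ≤ 0 := div_nonpos_of_nonneg_of_nonpos (by norm_num) h
    linarith
  have hωM : ω * M < 2 := (lt_div_iff₀ hMpos).mp hω1
  -- V term
  have hFC : Fᴴ * C = Matrix.diagonal (fun j => ((lam j : ℝ) : ℂ)) * Fᴴ := by
    rw [hCdef, ← Matrix.mul_assoc, ← Matrix.mul_assoc, hU, Matrix.one_mul]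
  have hdm : (Matrix.diagonal (fun j => ((lam j : ℝ) : ℂ)) * Fᴴ).mulVec x
      = fun j => ((lam j : ℝ) : ℂ) * y j := by
    funext j
    rw [← Matrix.mulVec_mulVec, Matrix.mulVec_diagonal]
  have hmv : (Fᴴ).mulVec (((1 : Matrix (Fin n) (Fin n) ℂ) - (ω : ℂ) • C).mulVec x)
      = fun j => (((1 - ω * lam j : ℝ) : ℂ)) * y j := by
    rw [Matrix.mulVec_mulVec, Matrix.mul_sub, Matrix.mul_one, Matrix.mul_smul, hFC,
      Matrix.sub_mulVec, Matrix.smul_mulVec, hdm]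
    funext j
    rw [Pi.sub_apply, Pi.smul_apply, smul_eq_mul]
    show y j - _ = _
    push_cast
    ring
  -- middle matrix
  have hinv : (((a₀ : ℝ) : ℂ) • (1 : Matrix (Fin n) (Fin n) ℂ))⁻¹
      = (((a₀ : ℝ) : ℂ))⁻¹ • (1 : Matrix (Fin n) (Fin n) ℂ) := by
    apply Matrix.inv_eq_right_inv
    rw [Matrix.smul_mul, Matrix.mul_smul, Matrix.one_mul, smul_smul,
      mul_inv_cancel₀ ha₀c, one_smul]
  have hmid : C * (((a₀ : ℝ) : ℂ) • (1 : Matrix (Fin n) (Fin n) ℂ))⁻¹ * C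
      = F * Matrix.diagonal (fun j => ((a₀⁻¹ * (lam j)^2 : ℝ) : ℂ)) * Fᴴ := by
    rw [hinv, Matrix.mul_smul, Matrix.mul_one, Matrix.smul_mul]
    rw [hCdef]
    simp only [Matrix.mul_assoc]
    rw [← Matrix.mul_assoc Fᴴ F, hU, Matrix.one_mul]
    rw [← Matrix.mul_assoc (Matrix.diagonal _) (Matrix.diagonal _), Matrix.diagonal_mul_diagonal]
    rw [← Matrix.mul_assoc F, ← Matrix.mul_assoc F]
    have hdiag : (Matrix.diagonal fun j => ((a₀⁻¹ * (lam j)^2 : ℝ) : ℂ))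
        = (((a₀ : ℝ) : ℂ))⁻¹ • Matrix.diagonal (fun i => ((lam i : ℝ) : ℂ) * ((lam i : ℝ) : ℂ)) := by
      rw [← Matrix.diagonal_smul]
      apply congrArg Matrix.diagonal
      funext j
      show ((a₀⁻¹ * (lam j)^2 : ℝ) : ℂ) = (((a₀ : ℝ) : ℂ))⁻¹ • (((lam j : ℝ) : ℂ) * ((lam j : ℝ) : ℂ))
      rw [smul_eq_mul]
      push_cast
      ring
    rw [hdiag, Matrix.mul_smul, Matrix.smul_mul]
  -- rewrite the three quadratic forms
  have hCr : F * Matrix.diagonal (fun j => ((lam j : ℝ) : ℂ)) * Fᴴ = C := rfl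
  have e1 : wnormSq C (((1 : Matrix (Fin n) (Fin n) ℂ) - (ω : ℂ) • C).mulVec x)
      = ∑ j, lam j * ((1 - ω * lam j)^2 * Complex.normSq (y j)) := by
    have h := wnormSq_conj F lam (((1 : Matrix (Fin n) (Fin n) ℂ) - (ω : ℂ) • C).mulVec x)
    rw [hCr] at h
    rw [h]
    refine Finset.sum_congr rfl fun j _ => ?_
    rw [congrFun hmv j, Complex.normSq_mul, Complex.normSq_ofReal]
    ring
  have e2 : wnormSq C x = ∑ j, lam j * Complex.normSq (y j) := by
    have h := wnormSq_conj F lam x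
    rw [hCr] at h
    exact h
  have e3 : wnormSq (C * (((a₀ : ℝ) : ℂ) • (1 : Matrix (Fin n) (Fin n) ℂ))⁻¹ * C) x
      = ∑ j, (a₀⁻¹ * (lam j)^2) * Complex.normSq (y j) := by
    rw [hmid]
    exact wnormSq_conj F (fun j => a₀⁻¹ * (lam j)^2) x
  rw [e1, e2, e3, Finset.mul_sum, ← Finset.sum_sub_distrib]
  apply Finset.sum_le_sum
  intro j _
  set l := lam j
  set t := Complex.normSq (y j) with ht
  have ht0 : 0 ≤ t := Complex.normSq_nonneg _
  have hl0 : 0 ≤ l := hlam0 j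
  have hlM : l ≤ M := hlamM j
  have key : α * (a₀⁻¹ * l^2) ≤ ω * (2 - ω * M) * l^2 := by
    have h1 : α * (a₀⁻¹ * l^2) ≤ (a₀ * ω * (2 - ω * M)) * (a₀⁻¹ * l^2) := by
      apply mul_le_mul_of_nonneg_right hα
      positivity
    have h2 : (a₀ * ω * (2 - ω * M)) * (a₀⁻¹ * l^2) = ω * (2 - ω * M) * l^2 := by
      field_simp
    linarith
  nlinarith [mul_nonneg (mul_nonneg ht0 (sq_nonneg (ω * l))) (sub_nonneg.mpr hlM),
    mul_le_mul_of_nonneg_right key ht0]
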